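/- arXiv:1904.06321 — 4 statements merged into one kernel-verified Lean document; each statement's English description precedes it below -/
import Mathlib

section
/- Let f : ℝⁿ → ℝ be differentiable with gradient ∇f that is L-Lipschitz continuous on ℝⁿ for some L > 0. Let x, d ∈ ℝⁿ with g = ∇f(x) ≠ 0 and d ≠ 0, let τ, c₁, ρ ∈ (0,1) and ᾱ > 0, and suppose d satisfies ⟨d, g⟩ ≤ -(1-τ)·‖g‖². Suppose the steplength α > 0 satisfies either α = ᾱ, or (α ≤ ᾱ and f(x + ρ⁻¹α d) > f(x) + c₁·ρ⁻¹·α·⟨d, g⟩). Then α ≥ C·‖g‖²/‖d‖² where C = min{ᾱ(1-τ)², ρ(1-c₁)(1-τ)/L}. -/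
open RealInnerProductSpace

open InnerProductSpace in
lemma descent_lemma_no_half
    (n : ℕ) (f : EuclideanSpace ℝ (Fin n) → ℝ)
    (hf : Differentiable ℝ f)
    (L : ℝ)
    (hlip : ∀ x y : EuclideanSpace ℝ (Fin n),
      ‖gradient f x - gradient f y‖ ≤ L * ‖x - y‖)
    (x y : EuclideanSpace ℝ (Fin n)) :
    f y ≤ f x + ⟪gradient f x, y - x⟫ + L * ‖y - x‖ ^ 2 := by
  set g := gradient f x with hgdef
  set G : EuclideanSpace ℝ (Fin n) →L[ℝ] ℝ := (toDual ℝ (EuclideanSpace ℝ (Fin n)) g : _)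
  set φ : EuclideanSpace ℝ (Fin n) → ℝ := fun z => f z - G z with hφ
  have hGdiff : Differentiable ℝ (fun z : EuclideanSpace ℝ (Fin n) => G z) :=
    G.differentiable
  have hφdiff : ∀ z, DifferentiableAt ℝ φ z := fun z => ((hf z).sub (hGdiff z))
  have hfderiv : ∀ z, fderiv ℝ f z = toDual ℝ _ (gradient f z) := by
    intro z
    exact ((hf z).hasGradientAt.hasFDerivAt).fderiv
  have hbound : ∀ z ∈ segment ℝ x y, ‖fderiv ℝ φ z‖ ≤ L * ‖y - x‖ := by
    intro z hz
    have h1 : fderiv ℝ φ z = fderiv ℝ f z - G := by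
      rw [hφ]
      rw [fderiv_fun_sub (hf z) (hGdiff z), G.fderiv]
    have h2 : ‖fderiv ℝ φ z‖ = ‖gradient f z - g‖ := by
      rw [h1, hfderiv z]
      have : toDual ℝ (EuclideanSpace ℝ (Fin n)) (gradient f z) - G
          = toDual ℝ (EuclideanSpace ℝ (Fin n)) (gradient f z - g) := by
        simp [G, map_sub]
      rw [this]
      exact (toDual ℝ (EuclideanSpace ℝ (Fin n))).norm_map _
    rw [h2]
    obtain ⟨a, b, ha, hb, hab, hz⟩ := hz
    have hzx : z - x = b • (y - x) := by
      rw [← hz]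
      have : a • x + b • y - x = a • x + b • y - (a + b) • x := by rw [hab, one_smul]
      rw [this, add_smul]
      module
    have hLz : ‖gradient f z - g‖ ≤ L * ‖z - x‖ := hlip z x
    have hzxnorm : ‖z - x‖ ≤ ‖y - x‖ := by
      rw [hzx, norm_smul, Real.norm_eq_abs, abs_of_nonneg hb]
      nlinarith [norm_nonneg (y - x)]
    rcases le_or_gt 0 L with hL0 | hL0
    · calc ‖gradient f z - g‖ ≤ L * ‖z - x‖ := hLz
        _ ≤ L * ‖y - x‖ := by nlinarith
    · nlinarith [hlip y x, norm_nonneg (gradient f y - gradient f x),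
        norm_nonneg (y - x), norm_nonneg (z - x)]
  have key := (convex_segment x y).norm_image_sub_le_of_norm_fderiv_le
    (fun z _ => hφdiff z) hbound (left_mem_segment ℝ x y) (right_mem_segment ℝ x y)
  have hGsub : G y - G x = ⟪g, y - x⟫ := by
    simp only [G, toDual_apply_apply]
    rw [inner_sub_right]
  have hub : φ y - φ x ≤ L * ‖y - x‖ * ‖y - x‖ := le_trans (le_abs_self _) key
  have hφeq : φ y - φ x = f y - f x - ⟪g, y - x⟫ := by
    simp only [hφ]; rw [← hGsub]; ring
  rw [hφeq] at hub
  nlinarith [sq_nonneg ‖y - x‖]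

set_option maxHeartbeats 1000000 in
theorem steplength_lower_bound
    (n : ℕ) (f : EuclideanSpace ℝ (Fin n) → ℝ)
    (hf : Differentiable ℝ f)
    (L : ℝ) (hL : 0 < L)
    (hlip : ∀ x y : EuclideanSpace ℝ (Fin n),
      ‖gradient f x - gradient f y‖ ≤ L * ‖x - y‖)
    (x d : EuclideanSpace ℝ (Fin n))
    (hg : gradient f x ≠ 0) (hd : d ≠ 0)
    (τ c₁ ρ : ℝ)
    (hτ : τ ∈ Set.Ioo (0 : ℝ) 1) (hc₁ : c₁ ∈ Set.Ioo (0 : ℝ) 1)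
    (hρ : ρ ∈ Set.Ioo (0 : ℝ) 1)
    (ᾱ : ℝ) (hᾱ : 0 < ᾱ)
    (hdesc : ⟪d, gradient f x⟫ ≤ -(1 - τ) * ‖gradient f x‖ ^ 2)
    (α : ℝ) (hα : 0 < α)
    (hcases : α = ᾱ ∨ (α ≤ ᾱ ∧
      f (x + (ρ⁻¹ * α) • d) >
        f x + c₁ * (ρ⁻¹ * α) * ⟪d, gradient f x⟫)) :
    α ≥ min (ᾱ * (1 - τ) ^ 2) (ρ * (1 - c₁) * (1 - τ) / L) *
      ‖gradient f x‖ ^ 2 / ‖d‖ ^ 2 := by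
  obtain ⟨hτ0, hτ1⟩ := hτ
  obtain ⟨hc0, hc1⟩ := hc₁
  obtain ⟨hρ0, hρ1⟩ := hρ
  set g := gradient f x with hgdef
  have hgn : 0 < ‖g‖ := norm_pos_iff.mpr hg
  have hdn : 0 < ‖d‖ := norm_pos_iff.mpr hd
  have hCS : -⟪d, g⟫ ≤ ‖d‖ * ‖g‖ := by
    have h := abs_real_inner_le_norm d g
    cases abs_cases (⟪d, g⟫ : ℝ) with
    | inl h2 => linarith [real_inner_le_norm d g]
    | inr h2 => linarith
  have hkey : (1 - τ) * ‖g‖ ^ 2 ≤ ‖d‖ * ‖g‖ := by nlinarith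
  have hdg : (1 - τ) * ‖g‖ ≤ ‖d‖ := by
    have h := mul_le_mul_of_nonneg_right hkey (le_of_lt (inv_pos.mpr hgn))
    calc (1 - τ) * ‖g‖ = (1 - τ) * ‖g‖ ^ 2 * ‖g‖⁻¹ := by field_simp
      _ ≤ ‖d‖ * ‖g‖ * ‖g‖⁻¹ := h
      _ = ‖d‖ := by field_simp
  rcases hcases with heq | ⟨hle, hviol⟩
  · -- α = ᾱ : use min ≤ ᾱ(1-τ)² and (1-τ)²‖g‖² ≤ ‖d‖²
    subst heq
    have h1 : (1 - τ) ^ 2 * ‖g‖ ^ 2 ≤ ‖d‖ ^ 2 := by nlinarith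
    have hmin : min (α * (1 - τ) ^ 2) (ρ * (1 - c₁) * (1 - τ) / L) ≤ α * (1 - τ) ^ 2 :=
      min_le_left _ _
    rw [ge_iff_le, div_le_iff₀ (by positivity)]
    calc min (α * (1 - τ) ^ 2) (ρ * (1 - c₁) * (1 - τ) / L) * ‖g‖ ^ 2
        ≤ α * (1 - τ) ^ 2 * ‖g‖ ^ 2 := by nlinarith [sq_nonneg ‖g‖]
      _ = α * ((1 - τ) ^ 2 * ‖g‖ ^ 2) := by ring
      _ ≤ α * ‖d‖ ^ 2 := by nlinarith
  · -- Armijo violated at β = ρ⁻¹ α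
    set β : ℝ := ρ⁻¹ * α with hβdef
    have hβ : 0 < β := by positivity
    have hdesc2 := descent_lemma_no_half n f hf L hlip x (x + β • d)
    have hsub : x + β • d - x = β • d := by abel
    rw [hsub] at hdesc2
    have hinner : ⟪g, β • d⟫ = β * ⟪d, g⟫ := by
      rw [real_inner_smul_right, real_inner_comm]
    have hnorm : ‖β • d‖ ^ 2 = β ^ 2 * ‖d‖ ^ 2 := by
      rw [norm_smul, Real.norm_eq_abs, abs_of_pos hβ, mul_pow]
    rw [hinner, hnorm] at hdesc2
    -- combine with violation
    have hcomb : c₁ * β * ⟪d, g⟫ < β * ⟪d, g⟫ + L * (β ^ 2 * ‖d‖ ^ 2) := by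
      linarith [hdesc2, hviol]
    have hdgneg : (1 - τ) * ‖g‖ ^ 2 ≤ -⟪d, g⟫ := by linarith
    have hstep : (1 - c₁) * ((1 - τ) * ‖g‖ ^ 2) < L * β * ‖d‖ ^ 2 := by
      have h1 : (1 - c₁) * (-⟪d, g⟫) * β < L * β ^ 2 * ‖d‖ ^ 2 := by nlinarith
      have h2 : (1 - c₁) * ((1 - τ) * ‖g‖ ^ 2) * β ≤ (1 - c₁) * (-⟪d, g⟫) * β := by
        have := mul_le_mul_of_nonneg_left (mul_le_mul_of_nonneg_right hdgneg hβ.le)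
          (show (0:ℝ) ≤ 1 - c₁ by linarith)
        nlinarith [this]
      have h3 : (1 - c₁) * ((1 - τ) * ‖g‖ ^ 2) * β < L * β * ‖d‖ ^ 2 * β := by
        nlinarith [h1, h2]
      exact lt_of_mul_lt_mul_right h3 (le_of_lt hβ)
    have hαβ : α = ρ * β := by
      rw [hβdef]; field_simp
    have hmin : min (ᾱ * (1 - τ) ^ 2) (ρ * (1 - c₁) * (1 - τ) / L)
        ≤ ρ * (1 - c₁) * (1 - τ) / L := min_le_right _ _
    rw [ge_iff_le, div_le_iff₀ (by positivity)]
    calc min (ᾱ * (1 - τ) ^ 2) (ρ * (1 - c₁) * (1 - τ) / L) * ‖g‖ ^ 2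
        ≤ ρ * (1 - c₁) * (1 - τ) / L * ‖g‖ ^ 2 := by nlinarith [sq_nonneg ‖g‖]
      _ ≤ α * ‖d‖ ^ 2 := by
          rw [hαβ]
          rw [div_mul_eq_mul_div, div_le_iff₀ hL]
          nlinarith [hstep]
end

section
/- Let f : ℝⁿ → ℝ be differentiable, bounded below on ℝⁿ, with gradient ∇f that is L-Lipschitz continuous on ℝⁿ for some L > 0. Fix constants τ, c₁, ρ ∈ (0,1) and ᾱ > 0. Let x_k, d_k, α_k be generated by the new conjugate gradient-like algorithm: g_k = ∇f(x_k) ≠ 0 for all k, d_0 = -g_0, d_k = -g_k + τ·(‖g_k‖/‖d_{k-1}‖)·d_{k-1} for k ≥ 1, x_{k+1} = x_k + α_k d_k, where each α_k > 0 satisfies the Armijo condition f(x_{k+1}) ≤ f(x_k) + c₁ α_k ⟨d_k, g_k⟩ and either α_k = ᾱ or (α_k ≤ ᾱ and f(x_k + ρ⁻¹α_k d_k) > f(x_k) + c₁ρ⁻¹α_k ⟨d_k, g_k⟩). Then the Zoutendijk-type condition holds: ∑_{k=0}^∞ ‖g_k‖⁴/‖d_k‖² < ∞. -/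
open RealInnerProductSpace

theorem descent_lemma_aux {E : Type*} [NormedAddCommGroup E] [InnerProductSpace ℝ E] [CompleteSpace E]
    (f : E → ℝ) (hf : Differentiable ℝ f) (L : ℝ)
    (hlip : ∀ x y : E, ‖gradient f x - gradient f y‖ ≤ L * ‖x - y‖)
    (x v : E) :
    f (x + v) ≤ f x + ⟪gradient f x, v⟫ + L / 2 * ‖v‖ ^ 2 := by
  set C1 := ⟪gradient f x, v⟫ with hC1
  set φ : ℝ → ℝ := fun t => f (x + t • v) - t * C1 - t ^ 2 * (L / 2 * ‖v‖ ^ 2) with hφ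
  have hderiv : ∀ t : ℝ, HasDerivAt φ
      (⟪gradient f (x + t • v), v⟫ - C1 - 2 * t * (L / 2 * ‖v‖ ^ 2)) t := by
    intro t
    have h1 : HasDerivAt (fun t : ℝ => x + t • v) v t := by
      simpa using ((hasDerivAt_id t).smul_const v).const_add x
    have h2 := ((hf (x + t • v)).hasGradientAt.hasFDerivAt).comp_hasDerivAt t h1
    have h3 : HasDerivAt (fun t : ℝ => t * C1) C1 t := by
      simpa using (hasDerivAt_id t).mul_const C1
    have h4 : HasDerivAt (fun t : ℝ => t ^ 2 * (L / 2 * ‖v‖ ^ 2))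
        (2 * t * (L / 2 * ‖v‖ ^ 2)) t := by
      have := (hasDerivAt_pow 2 t).mul_const (L / 2 * ‖v‖ ^ 2)
      simpa using this
    have := (h2.sub h3).sub h4
    simpa [InnerProductSpace.toDual_apply_apply, hφ, Function.comp_def, Pi.sub_def] using this
  have hdiff : Differentiable ℝ φ := fun t => (hderiv t).differentiableAt
  have hmono : AntitoneOn φ (Set.Icc 0 1) := by
    apply antitoneOn_of_deriv_nonpos (convex_Icc 0 1)
      hdiff.continuous.continuousOn hdiff.differentiableOn
    intro t ht
    rw [interior_Icc] at ht
    rw [(hderiv t).deriv]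
    have ht0 : (0:ℝ) ≤ t := ht.1.le
    have hsub : ⟪gradient f (x + t • v), v⟫ - C1
        = ⟪gradient f (x + t • v) - gradient f x, v⟫ := by
      rw [hC1, inner_sub_left]
    have hbd : ⟪gradient f (x + t • v) - gradient f x, v⟫ ≤ L * t * ‖v‖ ^ 2 := by
      calc ⟪gradient f (x + t • v) - gradient f x, v⟫
          ≤ ‖gradient f (x + t • v) - gradient f x‖ * ‖v‖ := real_inner_le_norm _ _
        _ ≤ (L * ‖(x + t • v) - x‖) * ‖v‖ := by
            have := hlip (x + t • v) x
            have hv : (0:ℝ) ≤ ‖v‖ := norm_nonneg v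
            nlinarith [norm_nonneg (gradient f (x + t • v) - gradient f x)]
        _ = L * t * ‖v‖ ^ 2 := by
            rw [add_sub_cancel_left, norm_smul, Real.norm_eq_abs, abs_of_nonneg ht0]
            ring
    nlinarith [hbd, hsub]
  have h01 : φ 1 ≤ φ 0 :=
    hmono (Set.left_mem_Icc.2 zero_le_one) (Set.right_mem_Icc.2 zero_le_one) zero_le_one
  simp only [hφ, one_smul, one_pow, one_mul, zero_smul, add_zero, zero_pow, zero_mul,
    sub_zero, mul_zero] at h01
  linarith

set_option maxHeartbeats 2000000 in
theorem zoutendijk_condition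
    (n : ℕ) (f : EuclideanSpace ℝ (Fin n) → ℝ)
    (hf : Differentiable ℝ f)
    (hbdd : BddBelow (Set.range f))
    (L : ℝ) (hL : 0 < L)
    (hlip : ∀ x y : EuclideanSpace ℝ (Fin n),
      ‖gradient f x - gradient f y‖ ≤ L * ‖x - y‖)
    (τ c₁ ρ : ℝ)
    (hτ : τ ∈ Set.Ioo (0 : ℝ) 1) (hc₁ : c₁ ∈ Set.Ioo (0 : ℝ) 1)
    (hρ : ρ ∈ Set.Ioo (0 : ℝ) 1)
    (ᾱ : ℝ) (hᾱ : 0 < ᾱ)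
    (x d : ℕ → EuclideanSpace ℝ (Fin n)) (α : ℕ → ℝ)
    (hg : ∀ k, gradient f (x k) ≠ 0)
    (hd0 : d 0 = -gradient f (x 0))
    (hdk : ∀ k, d (k + 1) = -gradient f (x (k + 1)) +
      (τ * (‖gradient f (x (k + 1))‖ / ‖d k‖)) • d k)
    (hstep : ∀ k, x (k + 1) = x k + α k • d k)
    (hαpos : ∀ k, 0 < α k)
    (harmijo : ∀ k, f (x (k + 1)) ≤
      f (x k) + c₁ * α k * ⟪d k, gradient f (x k)⟫)
    (hbacktrack : ∀ k, α k = ᾱ ∨ (α k ≤ ᾱ ∧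
      f (x k + (ρ⁻¹ * α k) • d k) >
        f (x k) + c₁ * (ρ⁻¹ * α k) * ⟪d k, gradient f (x k)⟫)) :
    Summable (fun k => ‖gradient f (x k)‖ ^ 4 / ‖d k‖ ^ 2) := by
  obtain ⟨hτ0, hτ1⟩ := hτ
  obtain ⟨hc0, hc1⟩ := hc₁
  obtain ⟨hρ0, hρ1⟩ := hρ
  have hgpos : ∀ k, 0 < ‖gradient f (x k)‖ := fun k => norm_pos_iff.2 (hg k)
  -- lower bound on ‖d k‖
  have hdlow : ∀ k, (1 - τ) * ‖gradient f (x k)‖ ≤ ‖d k‖ := by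
    intro k
    induction k with
    | zero =>
      rw [hd0, norm_neg]
      nlinarith [hgpos 0]
    | succ k ih =>
      have hdk_pos : 0 < ‖d k‖ := lt_of_lt_of_le (by nlinarith [hgpos k]) ih
      have h1 : ‖(τ * (‖gradient f (x (k+1))‖ / ‖d k‖)) • d k‖
          = τ * ‖gradient f (x (k+1))‖ := by
        rw [norm_smul, Real.norm_eq_abs, abs_of_nonneg (by positivity)]
        field_simp
      have h2 : ‖(-gradient f (x (k+1))
              + (τ * (‖gradient f (x (k+1))‖ / ‖d k‖)) • d k : EuclideanSpace ℝ (Fin n))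
            - (τ * (‖gradient f (x (k+1))‖ / ‖d k‖)) • d k‖
          ≤ ‖(-gradient f (x (k+1))
              + (τ * (‖gradient f (x (k+1))‖ / ‖d k‖)) • d k : EuclideanSpace ℝ (Fin n))‖
            + ‖(τ * (‖gradient f (x (k+1))‖ / ‖d k‖)) • d k‖ := norm_sub_le _ _
      rw [add_sub_cancel_right, norm_neg, h1] at h2
      rw [hdk k]
      linarith
  have hdpos : ∀ k, 0 < ‖d k‖ := fun k =>
    lt_of_lt_of_le (by nlinarith [hgpos k]) (hdlow k)
  -- descent property
  have hinner : ∀ k, ⟪d k, gradient f (x k)⟫ ≤ -((1 - τ) * ‖gradient f (x k)‖ ^ 2) := by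
    intro k
    cases k with
    | zero =>
      rw [hd0, inner_neg_left, real_inner_self_eq_norm_sq]
      nlinarith [hgpos 0]
    | succ k =>
      have hdk_pos : 0 < ‖d k‖ := hdpos k
      have hdk_ne : ‖d k‖ ≠ 0 := ne_of_gt hdk_pos
      rw [hdk k, inner_add_left, inner_neg_left, real_inner_self_eq_norm_sq,
        real_inner_smul_left]
      have hc : 0 ≤ τ * (‖gradient f (x (k+1))‖ / ‖d k‖) := by positivity
      have hub : ⟪d k, gradient f (x (k+1))⟫ ≤ ‖d k‖ * ‖gradient f (x (k+1))‖ :=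
        real_inner_le_norm _ _
      have hmul : τ * (‖gradient f (x (k+1))‖ / ‖d k‖) * ⟪d k, gradient f (x (k+1))⟫
          ≤ τ * (‖gradient f (x (k+1))‖ / ‖d k‖) * (‖d k‖ * ‖gradient f (x (k+1))‖) :=
        mul_le_mul_of_nonneg_left hub hc
      have heq : τ * (‖gradient f (x (k+1))‖ / ‖d k‖) * (‖d k‖ * ‖gradient f (x (k+1))‖)
          = τ * ‖gradient f (x (k+1))‖ ^ 2 := by
        field_simp
      nlinarith
  have hqpos : ∀ k, 0 < -⟪d k, gradient f (x k)⟫ := by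
    intro k
    have h1 := hinner k
    have h2 : 0 < (1 - τ) * ‖gradient f (x k)‖ ^ 2 :=
      mul_pos (by linarith) (pow_pos (hgpos k) 2)
    linarith
  -- summability of α k * (-⟪d k, g k⟫)
  obtain ⟨B, hB⟩ := hbdd
  have hBle : ∀ y, B ≤ f y := fun y => hB (Set.mem_range_self y)
  have ha_sum : Summable (fun k => α k * (-⟪d k, gradient f (x k)⟫)) := by
    apply summable_of_sum_range_le (c := (f (x 0) - B) / c₁)
      (fun k => mul_nonneg (hαpos k).le (hqpos k).le)
    intro m
    have key : ∀ i, c₁ * (α i * (-⟪d i, gradient f (x i)⟫)) ≤ f (x i) - f (x (i + 1)) := by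
      intro i
      have := harmijo i
      nlinarith
    have hsum : c₁ * ∑ i ∈ Finset.range m, α i * (-⟪d i, gradient f (x i)⟫)
        ≤ f (x 0) - f (x m) := by
      rw [Finset.mul_sum]
      calc ∑ i ∈ Finset.range m, c₁ * (α i * (-⟪d i, gradient f (x i)⟫))
          ≤ ∑ i ∈ Finset.range m, (f (x i) - f (x (i+1))) :=
            Finset.sum_le_sum fun i _ => key i
        _ = f (x 0) - f (x m) := Finset.sum_range_sub' (fun i => f (x i)) m
    have hfm : B ≤ f (x m) := hBle _
    rw [le_div_iff₀ hc0]
    nlinarith [Finset.sum_nonneg (fun i (_ : i ∈ Finset.range m) =>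
      mul_nonneg (hαpos i).le (hqpos i).le)]
  -- pointwise comparison constant
  set C : ℝ := max (1 / ((1 - τ) ^ 3 * ᾱ)) (L / (2 * ρ * (1 - c₁) * (1 - τ) ^ 2)) with hCdef
  have hP1 : (0:ℝ) < (1 - τ) ^ 3 * ᾱ := mul_pos (pow_pos (by linarith) 3) hᾱ
  have hP2 : (0:ℝ) < 2 * ρ * (1 - c₁) * (1 - τ) ^ 2 :=
    mul_pos (mul_pos (mul_pos two_pos hρ0) (by linarith)) (pow_pos (by linarith) 2)
  have hCpos : 0 < C :=
    lt_of_lt_of_le (one_div_pos.2 hP1) (le_max_left _ _)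
  have hkey : ∀ k, ‖gradient f (x k)‖ ^ 4 / ‖d k‖ ^ 2
      ≤ C * (α k * (-⟪d k, gradient f (x k)⟫)) := by
    intro k
    have hD := hdpos k
    have hG := hgpos k
    have hq := hinner k
    have hqp := hqpos k
    have hdl := hdlow k
    have hD2 : (1 - τ) ^ 2 * ‖gradient f (x k)‖ ^ 2 ≤ ‖d k‖ ^ 2 := by
      nlinarith [mul_le_mul hdl hdl (mul_nonneg (by linarith) hG.le) hD.le]
    rw [div_le_iff₀ (by positivity : (0:ℝ) < ‖d k‖ ^ 2)]
    rcases hbacktrack k with hcase | ⟨hle, hviol⟩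
    · -- α k = ᾱ
      have hC1 : 1 / ((1 - τ) ^ 3 * ᾱ) ≤ C := le_max_left _ _
      have key1 : (1 - τ) ^ 3 * ᾱ * ‖gradient f (x k)‖ ^ 4
          ≤ ᾱ * (-⟪d k, gradient f (x k)⟫) * ‖d k‖ ^ 2 := by
        nlinarith [mul_le_mul (show (1 - τ) * ‖gradient f (x k)‖ ^ 2
            ≤ -⟪d k, gradient f (x k)⟫ by linarith) hD2
          (by positivity) hqp.le]
      have key2 : ‖gradient f (x k)‖ ^ 4
          ≤ (1 / ((1 - τ) ^ 3 * ᾱ)) * (α k * (-⟪d k, gradient f (x k)⟫)) * ‖d k‖ ^ 2 := by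
        rw [hcase]
        rw [show (1 / ((1 - τ) ^ 3 * ᾱ)) * (ᾱ * (-⟪d k, gradient f (x k)⟫)) * ‖d k‖ ^ 2
          = (ᾱ * (-⟪d k, gradient f (x k)⟫) * ‖d k‖ ^ 2) / ((1 - τ) ^ 3 * ᾱ) by ring]
        rw [le_div_iff₀ hP1]
        nlinarith [key1]
      refine key2.trans ?_
      gcongr
      exact mul_nonneg (hαpos k).le hqp.le
    · -- backtracking case
      have hC2 : L / (2 * ρ * (1 - c₁) * (1 - τ) ^ 2) ≤ C := le_max_right _ _
      have hspos : 0 < ρ⁻¹ * α k := mul_pos (inv_pos.2 hρ0) (hαpos k)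
      have hdesc := descent_lemma_aux f hf L hlip (x k) ((ρ⁻¹ * α k) • d k)
      rw [real_inner_smul_right, norm_smul, Real.norm_eq_abs, abs_of_pos hspos,
        mul_pow, real_inner_comm] at hdesc
      -- combine with violation
      have hcomb : (1 - c₁) * (-⟪d k, gradient f (x k)⟫)
          < L / 2 * (ρ⁻¹ * α k) * ‖d k‖ ^ 2 := by
        have h0 : c₁ * (ρ⁻¹ * α k) * ⟪d k, gradient f (x k)⟫
            < (ρ⁻¹ * α k) * ⟪d k, gradient f (x k)⟫
              + L / 2 * ((ρ⁻¹ * α k) ^ 2 * ‖d k‖ ^ 2) := by linarith [hviol, hdesc]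
        nlinarith [h0, hspos]
      have hsD : 2 * (1 - c₁) * (-⟪d k, gradient f (x k)⟫)
          < L * ((ρ⁻¹ * α k) * ‖d k‖ ^ 2) := by nlinarith [hcomb]
      have hGq : (1 - τ) ^ 2 * ‖gradient f (x k)‖ ^ 4 ≤ (-⟪d k, gradient f (x k)⟫) ^ 2 := by
        nlinarith [mul_le_mul (show (1 - τ) * ‖gradient f (x k)‖ ^ 2
            ≤ -⟪d k, gradient f (x k)⟫ by linarith)
          (show (1 - τ) * ‖gradient f (x k)‖ ^ 2
            ≤ -⟪d k, gradient f (x k)⟫ by linarith)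
          (mul_nonneg (by linarith) (by positivity)) hqp.le]
      have hqq : 2 * (1 - c₁) * (-⟪d k, gradient f (x k)⟫) ^ 2
          ≤ L * ((ρ⁻¹ * α k) * ‖d k‖ ^ 2) * (-⟪d k, gradient f (x k)⟫) := by
        nlinarith [mul_lt_mul_of_pos_right hsD hqp]
      have final : 2 * ρ * (1 - c₁) * (1 - τ) ^ 2 * ‖gradient f (x k)‖ ^ 4
          ≤ L * (α k * (-⟪d k, gradient f (x k)⟫) * ‖d k‖ ^ 2) := by
        have hα : α k = ρ * (ρ⁻¹ * α k) := by field_simp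
        rw [hα]
        nlinarith [mul_le_mul_of_nonneg_left hGq
            (le_of_lt (mul_pos (mul_pos two_pos hρ0) (show (0:ℝ) < 1 - c₁ by linarith))),
          mul_le_mul_of_nonneg_left hqq hρ0.le]
      have key2 : ‖gradient f (x k)‖ ^ 4
          ≤ (L / (2 * ρ * (1 - c₁) * (1 - τ) ^ 2))
            * (α k * (-⟪d k, gradient f (x k)⟫)) * ‖d k‖ ^ 2 := by
        rw [show (L / (2 * ρ * (1 - c₁) * (1 - τ) ^ 2))
            * (α k * (-⟪d k, gradient f (x k)⟫)) * ‖d k‖ ^ 2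
          = (L * (α k * (-⟪d k, gradient f (x k)⟫) * ‖d k‖ ^ 2))
            / (2 * ρ * (1 - c₁) * (1 - τ) ^ 2) by ring]
        rw [le_div_iff₀ hP2]
        nlinarith [final]
      refine key2.trans ?_
      gcongr
      exact mul_nonneg (hαpos k).le hqp.le
  apply Summable.of_nonneg_of_le (fun k => by positivity) hkey
  exact ha_sum.mul_left C
end

section
/- Let f : ℝⁿ → ℝ be differentiable, bounded below on ℝⁿ, with gradient ∇f that is L-Lipschitz continuous on ℝⁿ for some L > 0. Fix constants τ, c₁, ρ ∈ (0,1) and ᾱ > 0. Let x_k, d_k, α_k be generated by the new conjugate gradient-like algorithm: g_k = ∇f(x_k) ≠ 0 for all k, d_0 = -g_0, d_k = -g_k + τ·(‖g_k‖/‖d_{k-1}‖)·d_{k-1} for k ≥ 1, x_{k+1} = x_k + α_k d_k, where each α_k > 0 satisfies the Armijo condition f(x_{k+1}) ≤ f(x_k) + c₁ α_k ⟨d_k, g_k⟩ and either α_k = ᾱ or (α_k ≤ ᾱ and f(x_k + ρ⁻¹α_k d_k) > f(x_k) + c₁ρ⁻¹α_k ⟨d_k, g_k⟩). Then ∑_{k=0}^∞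 ‖g_k‖² < ∞. -/
open RealInnerProductSpace

lemma descent_lemma {n : ℕ} (f : EuclideanSpace ℝ (Fin n) → ℝ)
    (hf : Differentiable ℝ f) (L : ℝ) (hL : 0 ≤ L)
    (hlip : ∀ x y : EuclideanSpace ℝ (Fin n),
      ‖gradient f x - gradient f y‖ ≤ L * ‖x - y‖)
    (x v : EuclideanSpace ℝ (Fin n)) :
    f (x + v) ≤ f x + ⟪gradient f x, v⟫ + L * ‖v‖ ^ 2 := by
  set φ : ℝ → ℝ := fun t => f (x + t • v) with hφdef
  have hφ : ∀ t : ℝ, HasDerivAt φ (⟪gradient f (x + t • v), v⟫) t := by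
    intro t
    have h1 : HasDerivAt (fun t : ℝ => x + t • v) v t := by
      simpa using ((hasDerivAt_id t).smul_const v).const_add x
    have h2 : HasFDerivAt f
        (InnerProductSpace.toDual ℝ _ (gradient f (x + t • v))) (x + t • v) :=
      hasGradientAt_iff_hasFDerivAt.mp (hf (x + t • v)).hasGradientAt
    have h3 := h2.comp_hasDerivAt t h1
    have h4 : HasDerivAt φ ((InnerProductSpace.toDual ℝ _ (gradient f (x + t • v))) v) t := h3
    simpa using h4
  obtain ⟨c, hc, hceq⟩ := exists_hasDerivAt_eq_slope φ
      (fun t => ⟪gradient f (x + t • v), v⟫) one_pos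
      (fun t _ => (hφ t).continuousAt.continuousWithinAt)
      (fun t _ => hφ t)
  have h0 : φ 0 = f x := by simp [hφdef]
  have h1 : φ 1 = f (x + v) := by simp [hφdef]
  have key : f (x + v) - f x = ⟪gradient f (x + c • v), v⟫ := by
    rw [← h0, ← h1, hceq]; ring
  have hsplit : ⟪gradient f (x + c • v), v⟫
      = ⟪gradient f x, v⟫ + ⟪gradient f (x + c • v) - gradient f x, v⟫ := by
    rw [inner_sub_left]; ring
  have hb : ⟪gradient f (x + c • v) - gradient f x, v⟫ ≤ L * ‖v‖ ^ 2 := by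
    calc ⟪gradient f (x + c • v) - gradient f x, v⟫
        ≤ ‖gradient f (x + c • v) - gradient f x‖ * ‖v‖ := real_inner_le_norm _ _
      _ ≤ (L * ‖(x + c • v) - x‖) * ‖v‖ := by
          gcongr; exact hlip _ _
      _ = L * (c * ‖v‖) * ‖v‖ := by
          rw [add_sub_cancel_left, norm_smul, Real.norm_eq_abs,
            abs_of_pos hc.1]
      _ ≤ L * (1 * ‖v‖) * ‖v‖ := by
          have := hc.2.le
          gcongr
      _ = L * ‖v‖ ^ 2 := by ring
  linarith [key, hsplit, hb]

set_option maxHeartbeats 1000000 in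
theorem gradient_norm_sq_summable
    (n : ℕ) (f : EuclideanSpace ℝ (Fin n) → ℝ)
    (hf : Differentiable ℝ f)
    (hbdd : BddBelow (Set.range f))
    (L : ℝ) (hL : 0 < L)
    (hlip : ∀ x y : EuclideanSpace ℝ (Fin n),
      ‖gradient f x - gradient f y‖ ≤ L * ‖x - y‖)
    (τ c₁ ρ : ℝ)
    (hτ : τ ∈ Set.Ioo (0 : ℝ) 1) (hc₁ : c₁ ∈ Set.Ioo (0 : ℝ) 1)
    (hρ : ρ ∈ Set.Ioo (0 : ℝ) 1)
    (ᾱ : ℝ) (hᾱ : 0 < ᾱ)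
    (x d : ℕ → EuclideanSpace ℝ (Fin n)) (α : ℕ → ℝ)
    (hg : ∀ k, gradient f (x k) ≠ 0)
    (hd0 : d 0 = -gradient f (x 0))
    (hdk : ∀ k, d (k + 1) = -gradient f (x (k + 1)) +
      (τ * (‖gradient f (x (k + 1))‖ / ‖d k‖)) • d k)
    (hstep : ∀ k, x (k + 1) = x k + α k • d k)
    (hαpos : ∀ k, 0 < α k)
    (harmijo : ∀ k, f (x (k + 1)) ≤
      f (x k) + c₁ * α k * ⟪d k, gradient f (x k)⟫)
    (hbacktrack : ∀ k, α k = ᾱ ∨ (α k ≤ ᾱ ∧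
      f (x k + (ρ⁻¹ * α k) • d k) >
        f (x k) + c₁ * (ρ⁻¹ * α k) * ⟪d k, gradient f (x k)⟫)) :
    Summable (fun k => ‖gradient f (x k)‖ ^ 2) := by
  obtain ⟨hτ0, hτ1⟩ := hτ
  obtain ⟨hc0, hc1⟩ := hc₁
  obtain ⟨hρ0, hρ1⟩ := hρ
  have h1τ : (0:ℝ) < 1 - τ := by linarith
  have h1c : (0:ℝ) < 1 - c₁ := by linarith
  have h1τ' : (0:ℝ) < 1 + τ := by linarith
  set g : ℕ → EuclideanSpace ℝ (Fin n) := fun k => gradient f (x k) with hgdef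
  have hgnorm : ∀ k, 0 < ‖g k‖ := fun k => norm_pos_iff.mpr (hg k)
  have hgsq : ∀ k, 0 < ‖g k‖ ^ 2 := fun k => pow_pos (hgnorm k) 2
  -- Key structural bounds, by induction
  have key : ∀ k, ⟪d k, g k⟫ ≤ -(1 - τ) * ‖g k‖ ^ 2 ∧ ‖d k‖ ≤ (1 + τ) * ‖g k‖ := by
    intro k
    induction k with
    | zero =>
        constructor
        · rw [hd0]
          rw [inner_neg_left, real_inner_self_eq_norm_sq]
          nlinarith [hgsq 0, hτ0]
        · rw [hd0, norm_neg]
          nlinarith [hgnorm 0, hτ0]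
    | succ k ih =>
        have hdkpos : 0 < ‖d k‖ := by
          rcases eq_or_lt_of_le (norm_nonneg (d k)) with h | h
          · exfalso
            have hd0' : d k = 0 := norm_eq_zero.mp h.symm
            have h2 := ih.1
            rw [hd0'] at h2
            simp only [inner_zero_left] at h2
            nlinarith [mul_pos h1τ (hgsq k)]
          · exact h
        have hcs : ⟪d k, g (k+1)⟫ ≤ ‖d k‖ * ‖g (k+1)‖ := real_inner_le_norm _ _
        constructor
        · rw [hdk k]
          rw [inner_add_left, inner_neg_left, inner_smul_left,
            real_inner_self_eq_norm_sq]
          have h2 : (τ * (‖g (k+1)‖ / ‖d k‖)) * ⟪d k, g (k+1)⟫ ≤ τ * ‖g (k+1)‖ ^ 2 := by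
            have hcoef : 0 ≤ τ * (‖g (k+1)‖ / ‖d k‖) := by
              apply mul_nonneg hτ0.le
              exact div_nonneg (norm_nonneg _) (norm_nonneg _)
            calc (τ * (‖g (k+1)‖ / ‖d k‖)) * ⟪d k, g (k+1)⟫
                ≤ (τ * (‖g (k+1)‖ / ‖d k‖)) * (‖d k‖ * ‖g (k+1)‖) :=
                  mul_le_mul_of_nonneg_left hcs hcoef
              _ = τ * ‖g (k+1)‖ ^ 2 := by
                  field_simp [hdkpos.ne']
          simp only [RCLike.star_def, conj_trivial]
          linarith [h2]
        · rw [hdk k]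
          calc ‖-g (k+1) + (τ * (‖g (k+1)‖ / ‖d k‖)) • d k‖
              ≤ ‖-g (k+1)‖ + ‖(τ * (‖g (k+1)‖ / ‖d k‖)) • d k‖ := norm_add_le _ _
            _ = ‖g (k+1)‖ + (τ * (‖g (k+1)‖ / ‖d k‖)) * ‖d k‖ := by
                rw [norm_neg, norm_smul, Real.norm_eq_abs, abs_of_nonneg]
                apply mul_nonneg hτ0.le
                exact div_nonneg (norm_nonneg _) (norm_nonneg _)
            _ = (1 + τ) * ‖g (k+1)‖ := by
                field_simp [hdkpos.ne']
  have hdpos : ∀ k, 0 < ‖d k‖ := by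
    intro k
    rcases eq_or_lt_of_le (norm_nonneg (d k)) with h | h
    · exfalso
      have hd0' : d k = 0 := norm_eq_zero.mp h.symm
      have h2 := (key k).1
      rw [hd0'] at h2
      simp only [inner_zero_left] at h2
      nlinarith [mul_pos h1τ (hgsq k)]
    · exact h
  -- the per-step decrease constant
  set C : ℝ := min (c₁ * ᾱ * (1 - τ))
      (c₁ * ρ * (1 - c₁) * (1 - τ)^2 / (L * (1 + τ)^2)) with hCdef
  have hCpos : 0 < C := by
    apply lt_min
    · exact mul_pos (mul_pos hc0 hᾱ) h1τ
    · apply div_pos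
      · exact mul_pos (mul_pos (mul_pos hc0 hρ0) h1c) (pow_pos h1τ 2)
      · exact mul_pos hL (pow_pos h1τ' 2)
  -- per-step decrease
  have hdec : ∀ k, C * ‖g k‖ ^ 2 ≤ f (x k) - f (x (k+1)) := by
    intro k
    have hinner := (key k).1
    have hdnorm := (key k).2
    have hLd : 0 < L * ‖d k‖ ^ 2 := mul_pos hL (pow_pos (hdpos k) 2)
    have hip : 0 ≤ -⟪d k, g k⟫ := by nlinarith [mul_pos h1τ (hgsq k)]
    rcases hbacktrack k with hcase | ⟨_, hviol⟩
    · -- α k = ᾱ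
      have h1 := harmijo k
      rw [hcase] at h1
      have h2 : c₁ * ᾱ * ⟪d k, g k⟫ ≤ c₁ * ᾱ * (-(1 - τ) * ‖g k‖ ^ 2) :=
        mul_le_mul_of_nonneg_left hinner (mul_pos hc0 hᾱ).le
      have h3 : C ≤ c₁ * ᾱ * (1 - τ) := min_le_left _ _
      have h4 : C * ‖g k‖ ^ 2 ≤ (c₁ * ᾱ * (1 - τ)) * ‖g k‖ ^ 2 :=
        mul_le_mul_of_nonneg_right h3 (hgsq k).le
      nlinarith [h1, h2, h4]
    · -- backtrack case: lower bound on α k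
      have hβpos : 0 < ρ⁻¹ * α k := mul_pos (inv_pos.mpr hρ0) (hαpos k)
      have hdesc := descent_lemma f hf L hL.le hlip (x k) ((ρ⁻¹ * α k) • d k)
      rw [inner_smul_right, norm_smul, Real.norm_eq_abs, abs_of_pos hβpos] at hdesc
      rw [real_inner_comm (d k) (gradient f (x k))] at hdesc
      have hv : f (x k) + c₁ * (ρ⁻¹ * α k) * ⟪d k, g k⟫ <
          f (x k) + (ρ⁻¹ * α k) * ⟪d k, g k⟫ + L * ((ρ⁻¹ * α k) * ‖d k‖) ^ 2 :=
        lt_of_lt_of_le hviol hdesc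
      have h : (1 - c₁) * (-⟪d k, g k⟫) < L * (ρ⁻¹ * α k) * ‖d k‖ ^ 2 := by
        have hm : ((1 - c₁) * (-⟪d k, g k⟫)) * (ρ⁻¹ * α k) <
            (L * (ρ⁻¹ * α k) * ‖d k‖ ^ 2) * (ρ⁻¹ * α k) := by nlinarith [hv]
        exact lt_of_mul_lt_mul_right hm hβpos.le
      have hβlb : (1 - c₁) * (-⟪d k, g k⟫) / (L * ‖d k‖ ^ 2) < ρ⁻¹ * α k := by
        rw [div_lt_iff₀ hLd]
        nlinarith [h]
      have hαeq : ρ * (ρ⁻¹ * α k) = α k := by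
        field_simp
      have hαlb : ρ * ((1 - c₁) * (-⟪d k, g k⟫) / (L * ‖d k‖ ^ 2)) < α k := by
        rw [← hαeq]
        exact mul_lt_mul_of_pos_left hβlb hρ0
      -- f decrease
      have h1 := harmijo k
      have h2 : c₁ * (ρ * ((1 - c₁) * (-⟪d k, g k⟫) / (L * ‖d k‖ ^ 2))) * (-⟪d k, g k⟫)
          ≤ c₁ * α k * (-⟪d k, g k⟫) :=
        mul_le_mul_of_nonneg_right
          (mul_le_mul_of_nonneg_left hαlb.le hc0.le) hip
      have h3 : c₁ * (ρ * ((1 - c₁) * (-⟪d k, g k⟫) / (L * ‖d k‖ ^ 2))) * (-⟪d k, g k⟫)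
          = c₁ * ρ * (1 - c₁) * ((-⟪d k, g k⟫)^2 / (L * ‖d k‖ ^ 2)) := by
        field_simp
      have h4 : (1 - τ)^2 * ‖g k‖^4 / (L * ((1+τ) * ‖g k‖) ^ 2) ≤
          (-⟪d k, g k⟫)^2 / (L * ‖d k‖ ^ 2) := by
        have hnum : (1 - τ)^2 * ‖g k‖^4 ≤ (-⟪d k, g k⟫)^2 := by
          have hle : (1 - τ) * ‖g k‖ ^ 2 ≤ -⟪d k, g k⟫ := by linarith [hinner]
          nlinarith [mul_pos h1τ (hgsq k), hle, hip]
        have hden : L * ‖d k‖ ^ 2 ≤ L * ((1+τ) * ‖g k‖) ^ 2 := by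
          apply mul_le_mul_of_nonneg_left _ hL.le
          nlinarith [hdpos k, hdnorm]
        exact div_le_div₀ (by positivity) hnum hLd hden
      have h5 : (1 - τ)^2 * ‖g k‖^4 / (L * ((1+τ) * ‖g k‖) ^ 2)
          = (1 - τ)^2 / (L * (1+τ)^2) * ‖g k‖^2 := by
        field_simp [(hgnorm k).ne', hL.ne', h1τ'.ne']
      have h6 : C ≤ c₁ * ρ * (1 - c₁) * (1 - τ)^2 / (L * (1 + τ)^2) := min_le_right _ _
      have hc₁ρ : (0:ℝ) ≤ c₁ * ρ * (1 - c₁) := by positivity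
      have h8 : C * ‖g k‖^2 ≤ c₁ * α k * (-⟪d k, g k⟫) := by
        calc C * ‖g k‖^2
            ≤ (c₁ * ρ * (1 - c₁) * (1 - τ)^2 / (L * (1 + τ)^2)) * ‖g k‖^2 :=
              mul_le_mul_of_nonneg_right h6 (hgsq k).le
          _ = c₁ * ρ * (1 - c₁) * ((1 - τ)^2 / (L * (1+τ)^2) * ‖g k‖^2) := by ring
          _ = c₁ * ρ * (1 - c₁) * ((1 - τ)^2 * ‖g k‖^4 / (L * ((1+τ) * ‖g k‖) ^ 2)) := by
              rw [h5]
          _ ≤ c₁ * ρ * (1 - c₁) * ((-⟪d k, g k⟫)^2 / (L * ‖d k‖ ^ 2)) :=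
              mul_le_mul_of_nonneg_left h4 hc₁ρ
          _ = c₁ * (ρ * ((1 - c₁) * (-⟪d k, g k⟫) / (L * ‖d k‖ ^ 2))) * (-⟪d k, g k⟫) :=
              h3.symm
          _ ≤ c₁ * α k * (-⟪d k, g k⟫) := h2
      linarith [h8, h1]
  -- telescoping, bounded below
  obtain ⟨m, hm⟩ := hbdd
  have hmle : ∀ y, m ≤ f y := fun y => hm (Set.mem_range_self y)
  have hsum : ∀ N : ℕ, ∑ k ∈ Finset.range N, C * ‖g k‖ ^ 2 ≤ f (x 0) - m := by
    intro N
    have htel : ∑ k ∈ Finset.range N, (f (x k) - f (x (k+1))) = f (x 0) - f (x N) := by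
      have := Finset.sum_range_sub' (fun k => f (x k)) N
      simpa using this
    have h1 : ∑ k ∈ Finset.range N, C * ‖g k‖ ^ 2 ≤
        ∑ k ∈ Finset.range N, (f (x k) - f (x (k+1))) :=
      Finset.sum_le_sum (fun k _ => hdec k)
    have h2 := hmle (x N)
    linarith [h1, htel.le, htel.ge]
  apply summable_of_sum_range_le (c := (f (x 0) - m) / C)
  · intro k
    positivity
  · intro N
    rw [le_div_iff₀ hCpos]
    have := hsum N
    rw [← Finset.mul_sum] at this
    linarith [this]
end

section
/- Let f : ℝⁿ → ℝ be differentiable, bounded below on ℝⁿ, with gradient ∇f that is L-Lipschitz continuous on ℝⁿ for some L > 0. Fix constants τ, c₁, ρ ∈ (0,1) and ᾱ > 0. Let x_k, d_k, α_k be generated by the new conjugate gradient-like algorithm: g_k = ∇f(x_k) ≠ 0 for all k, d_0 = -g_0, d_k = -g_k + τ·(‖g_k‖/‖d_{k-1}‖)·d_{k-1} for k ≥ 1, x_{k+1} = x_k + α_k d_k, where each α_k > 0 satisfies the Armijo condition f(x_{k+1}) ≤ f(x_k) + c₁ α_k ⟨d_k, g_k⟩ and either α_k = ᾱ or (α_k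 ≤ ᾱ and f(x_k + ρ⁻¹α_k d_k) > f(x_k) + c₁ρ⁻¹α_k ⟨d_k, g_k⟩). Then the algorithm is globally convergent: lim_{k→∞} ‖∇f(x_k)‖ = 0. -/
open RealInnerProductSpace

private lemma cg_descent_lemma {n : ℕ} {f : EuclideanSpace ℝ (Fin n) → ℝ}
    (hf : Differentiable ℝ f) {L : ℝ}
    (hlip : ∀ x y : EuclideanSpace ℝ (Fin n), ‖gradient f x - gradient f y‖ ≤ L * ‖x - y‖)
    (x y : EuclideanSpace ℝ (Fin n)) :
    f y ≤ f x + ⟪gradient f x, y - x⟫ + L / 2 * ‖y - x‖ ^ 2 := by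
  set v := y - x with hv
  have hline : ∀ t : ℝ, HasDerivAt (fun t : ℝ => x + t • v) v t := by
    intro t
    simpa using ((hasDerivAt_id t).smul_const v).const_add x
  have hcomp : ∀ t : ℝ, HasDerivAt (fun t : ℝ => f (x + t • v))
      ⟪gradient f (x + t • v), v⟫ t := by
    intro t
    have hfd := ((hf (x + t • v)).hasGradientAt).hasFDerivAt
    simpa [Function.comp_def] using hfd.comp_hasDerivAt t (hline t)
  set c : ℝ := ⟪gradient f x, v⟫ with hc
  set b : ℝ := L / 2 * ‖v‖ ^ 2 with hb
  set g : ℝ → ℝ := fun t => f (x + t • v) - t * c - t ^ 2 * b with hgdef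
  have hgderiv : ∀ t : ℝ, HasDerivAt g
      (⟪gradient f (x + t • v), v⟫ - c - 2 * t * b) t := by
    intro t
    have h := ((hcomp t).sub (hasDerivAt_mul_const c)).sub
      ((hasDerivAt_pow 2 t).mul_const b)
    refine h.congr_deriv ?_
    norm_num [mul_comm]
  have hanti : AntitoneOn g (Set.Icc 0 1) := by
    apply antitoneOn_of_deriv_nonpos (convex_Icc 0 1)
    · exact (continuous_iff_continuousAt.mpr fun t =>
        (hgderiv t).differentiableAt.continuousAt).continuousOn
    · intro t _
      exact (hgderiv t).differentiableAt.differentiableWithinAt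
    · intro t ht
      rw [interior_Icc] at ht
      rw [(hgderiv t).deriv]
      have h1 : ⟪gradient f (x + t • v), v⟫ - c
          = ⟪gradient f (x + t • v) - gradient f x, v⟫ := by rw [inner_sub_left]
      have h2 : ⟪gradient f (x + t • v) - gradient f x, v⟫ ≤ L * t * ‖v‖ ^ 2 := by
        calc ⟪gradient f (x + t • v) - gradient f x, v⟫
            ≤ ‖gradient f (x + t • v) - gradient f x‖ * ‖v‖ := real_inner_le_norm _ _
          _ ≤ L * ‖x + t • v - x‖ * ‖v‖ := by
              apply mul_le_mul_of_nonneg_right (hlip _ _) (norm_nonneg _)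
          _ = L * t * ‖v‖ ^ 2 := by
              rw [add_sub_cancel_left, norm_smul, Real.norm_eq_abs, abs_of_pos ht.1]
              ring
      rw [h1]
      have h3 : 2 * t * b = L * t * ‖v‖ ^ 2 := by rw [hb]; ring
      linarith
  have h01 := hanti (Set.left_mem_Icc.mpr zero_le_one) (Set.right_mem_Icc.mpr zero_le_one)
    zero_le_one
  have hg0 : g 0 = f x := by simp [hgdef]
  have hg1 : g 1 = f y - c - b := by
    have : x + v = y := by rw [hv]; abel
    simp [hgdef, this]
  rw [hg0, hg1] at h01
  rw [hc, hb] at h01 ⊢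
  linarith

set_option maxHeartbeats 1000000 in
theorem global_convergence
    (n : ℕ) (f : EuclideanSpace ℝ (Fin n) → ℝ)
    (hf : Differentiable ℝ f)
    (hbdd : BddBelow (Set.range f))
    (L : ℝ) (hL : 0 < L)
    (hlip : ∀ x y : EuclideanSpace ℝ (Fin n),
      ‖gradient f x - gradient f y‖ ≤ L * ‖x - y‖)
    (τ c₁ ρ : ℝ)
    (hτ : τ ∈ Set.Ioo (0 : ℝ) 1) (hc₁ : c₁ ∈ Set.Ioo (0 : ℝ) 1)
    (hρ : ρ ∈ Set.Ioo (0 : ℝ) 1)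
    (ᾱ : ℝ) (hᾱ : 0 < ᾱ)
    (x d : ℕ → EuclideanSpace ℝ (Fin n)) (α : ℕ → ℝ)
    (hg : ∀ k, gradient f (x k) ≠ 0)
    (hd0 : d 0 = -gradient f (x 0))
    (hdk : ∀ k, d (k + 1) = -gradient f (x (k + 1)) +
      (τ * (‖gradient f (x (k + 1))‖ / ‖d k‖)) • d k)
    (hstep : ∀ k, x (k + 1) = x k + α k • d k)
    (hαpos : ∀ k, 0 < α k)
    (harmijo : ∀ k, f (x (k + 1)) ≤
      f (x k) + c₁ * α k * ⟪d k, gradient f (x k)⟫)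
    (hbacktrack : ∀ k, α k = ᾱ ∨ (α k ≤ ᾱ ∧
      f (x k + (ρ⁻¹ * α k) • d k) >
        f (x k) + c₁ * (ρ⁻¹ * α k) * ⟪d k, gradient f (x k)⟫)) :
    Filter.Tendsto (fun k => ‖gradient f (x k)‖) Filter.atTop (nhds 0) := by
  obtain ⟨hτ0, hτ1⟩ := hτ
  obtain ⟨hc₁0, hc₁1⟩ := hc₁
  obtain ⟨hρ0, hρ1⟩ := hρ
  have hgpos : ∀ k, 0 < ‖gradient f (x k)‖ := fun k => norm_pos_iff.mpr (hg k)
  -- sufficient descent direction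
  have hdg : ∀ k, ⟪d k, gradient f (x k)⟫ ≤ -(1 - τ) * ‖gradient f (x k)‖ ^ 2 := by
    intro k
    cases k with
    | zero =>
        rw [hd0, inner_neg_left, real_inner_self_eq_norm_sq]
        nlinarith [sq_nonneg ‖gradient f (x 0)‖]
    | succ k =>
        set G := gradient f (x (k + 1)) with hG
        rw [hdk k, inner_add_left, inner_neg_left, real_inner_smul_left,
          real_inner_self_eq_norm_sq]
        have h1 : τ * (‖G‖ / ‖d k‖) * ⟪d k, G⟫ ≤ τ * ‖G‖ ^ 2 := by
          by_cases hd0' : d k = 0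
          · simp [hd0']
            positivity
          · have hdn : 0 < ‖d k‖ := norm_pos_iff.mpr hd0'
            have h2 := real_inner_le_norm (d k) G
            have h3 : τ * (‖G‖ / ‖d k‖) * ⟪d k, G⟫ ≤ τ * (‖G‖ / ‖d k‖) * (‖d k‖ * ‖G‖) := by
              apply mul_le_mul_of_nonneg_left h2
              positivity
            calc τ * (‖G‖ / ‖d k‖) * ⟪d k, G⟫ ≤ τ * (‖G‖ / ‖d k‖) * (‖d k‖ * ‖G‖) := h3
              _ = τ * ‖G‖ ^ 2 := by field_simp
        nlinarith [sq_nonneg ‖G‖]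
  have hdneg : ∀ k, ⟪d k, gradient f (x k)⟫ < 0 := by
    intro k
    have h := hdg k
    have h2 : (0:ℝ) < (1 - τ) * ‖gradient f (x k)‖ ^ 2 :=
      mul_pos (by linarith) (pow_pos (hgpos k) 2)
    linarith
  have hdne : ∀ k, d k ≠ 0 := by
    intro k hk
    have := hdneg k
    rw [hk, inner_zero_left] at this
    exact lt_irrefl 0 this
  -- norm bound on directions
  have hdnorm : ∀ k, ‖d k‖ ≤ (1 + τ) * ‖gradient f (x k)‖ := by
    intro k
    cases k with
    | zero =>
        rw [hd0, norm_neg]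
        nlinarith [norm_nonneg (gradient f (x 0))]
    | succ k =>
        set G := gradient f (x (k + 1)) with hG
        rw [hdk k]
        refine (norm_add_le _ _).trans ?_
        rw [norm_neg, norm_smul, Real.norm_eq_abs]
        have hβ : 0 ≤ τ * (‖G‖ / ‖d k‖) := by positivity
        rw [abs_of_nonneg hβ]
        have : τ * (‖G‖ / ‖d k‖) * ‖d k‖ ≤ τ * ‖G‖ := by
          by_cases hd0' : d k = 0
          · simp [hd0']
            positivity
          · have hdn : 0 < ‖d k‖ := norm_pos_iff.mpr hd0'
            rw [mul_assoc, div_mul_cancel₀ _ (ne_of_gt hdn)]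
        linarith
  -- steplength lower bound
  set c₀ : ℝ := 2 * (1 - c₁) * (1 - τ) / (L * (1 + τ) ^ 2) with hc₀
  have hc₀pos : 0 < c₀ := by
    apply div_pos
    · nlinarith
    · positivity
  set αmin : ℝ := min ᾱ (ρ * c₀) with hαmin
  have hαminpos : 0 < αmin := lt_min hᾱ (mul_pos hρ0 hc₀pos)
  have hαlb : ∀ k, αmin ≤ α k := by
    intro k
    rcases hbacktrack k with h | ⟨hle, hgt⟩
    · rw [h]; exact min_le_left _ _
    · refine le_trans (min_le_right _ _) ?_
      set t := ρ⁻¹ * α k with ht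
      have htpos : 0 < t := mul_pos (inv_pos.mpr hρ0) (hαpos k)
      have hdesc := cg_descent_lemma hf hlip (x k) (x k + t • d k)
      rw [add_sub_cancel_left, real_inner_smul_right, norm_smul, Real.norm_eq_abs,
        abs_of_pos htpos] at hdesc
      rw [real_inner_comm] at hdesc
      set I := ⟪d k, gradient f (x k)⟫ with hI
      set D := ‖d k‖ with hD
      set G := ‖gradient f (x k)‖ with hGn
      have hkey : f (x k) + c₁ * t * I < f (x k) + t * I + L / 2 * (t * D) ^ 2 :=
        lt_of_lt_of_le hgt hdesc
      have hkey2 : (1 - c₁) * (-I) < L / 2 * t * D ^ 2 := by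
        have h5 : t * ((1 - c₁) * (-I)) < t * (L / 2 * t * D ^ 2) := by nlinarith
        exact lt_of_mul_lt_mul_left h5 htpos.le
      have hIle : (1 - τ) * G ^ 2 ≤ -I := by
        have := hdg k
        linarith
      have hDle : D ^ 2 ≤ (1 + τ) ^ 2 * G ^ 2 := by
        have h6 := hdnorm k
        nlinarith [norm_nonneg (d k), hgpos k]
      have hGpos : 0 < G := hgpos k
      have hG2pos : 0 < G ^ 2 := pow_pos hGpos 2
      have hA : (1 - c₁) * ((1 - τ) * G ^ 2) ≤ (1 - c₁) * (-I) :=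
        mul_le_mul_of_nonneg_left hIle (by linarith)
      have hB : L / 2 * t * D ^ 2 ≤ L / 2 * t * ((1 + τ) ^ 2 * G ^ 2) :=
        mul_le_mul_of_nonneg_left hDle (by positivity)
      have hC' : (1 - c₁) * ((1 - τ) * G ^ 2) < L / 2 * t * ((1 + τ) ^ 2 * G ^ 2) := by
        linarith
      have hC2 : (2 * (1 - c₁) * (1 - τ)) * G ^ 2 < (t * (L * (1 + τ) ^ 2)) * G ^ 2 := by
        nlinarith [hC']
      have hc₀lt : c₀ < t := by
        rw [hc₀, div_lt_iff₀ (by positivity)]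
        exact (mul_lt_mul_iff_of_pos_right hG2pos).mp hC2
      have : ρ * c₀ < ρ * t := mul_lt_mul_of_pos_left hc₀lt hρ0
      rw [ht, ← mul_assoc, mul_inv_cancel₀ (ne_of_gt hρ0), one_mul] at this
      exact this.le
  -- sufficient decrease
  set C : ℝ := c₁ * αmin * (1 - τ) with hC
  have hCpos : 0 < C := by
    apply mul_pos (mul_pos hc₁0 hαminpos)
    linarith
  have hdec : ∀ k, f (x (k + 1)) ≤ f (x k) - C * ‖gradient f (x k)‖ ^ 2 := by
    intro k
    have h1 := harmijo k
    have h2 := hdg k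
    have h3 := hαlb k
    have h4 := hαpos k
    have hG2 : (0:ℝ) ≤ ‖gradient f (x k)‖ ^ 2 := sq_nonneg _
    have h5 : c₁ * α k * ⟪d k, gradient f (x k)⟫
        ≤ c₁ * α k * (-(1 - τ) * ‖gradient f (x k)‖ ^ 2) := by
      apply mul_le_mul_of_nonneg_left h2
      positivity
    have h6 : c₁ * α k * (-(1 - τ) * ‖gradient f (x k)‖ ^ 2)
        ≤ -(C * ‖gradient f (x k)‖ ^ 2) := by
      rw [hC]
      nlinarith [mul_nonneg (mul_nonneg (mul_nonneg hc₁0.le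
        (sub_nonneg.mpr h3)) (by linarith : (0:ℝ) ≤ 1 - τ)) hG2]
    linarith
  -- convergence of f (x k)
  set a : ℕ → ℝ := fun k => f (x k) with ha
  have hanti : Antitone a := by
    apply antitone_nat_of_succ_le
    intro k
    have := hdec k
    nlinarith [sq_nonneg ‖gradient f (x k)‖, hCpos]
  have hbdd' : BddBelow (Set.range a) := by
    obtain ⟨m, hm⟩ := hbdd
    exact ⟨m, fun y hy => by
      obtain ⟨k, rfl⟩ := hy
      exact hm (Set.mem_range_self (x k))⟩
  have hconv : Filter.Tendsto a Filter.atTop (nhds (⨅ k, a k)) :=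
    tendsto_atTop_ciInf hanti hbdd'
  have hconv' : Filter.Tendsto (fun k => a (k + 1)) Filter.atTop (nhds (⨅ k, a k)) :=
    (Filter.tendsto_add_atTop_iff_nat 1).mpr hconv
  have hdiff : Filter.Tendsto (fun k => a k - a (k + 1)) Filter.atTop (nhds 0) := by
    simpa using hconv.sub hconv'
  have hsq : Filter.Tendsto (fun k => ‖gradient f (x k)‖ ^ 2) Filter.atTop (nhds 0) := by
    apply squeeze_zero (fun k => sq_nonneg _) (g := fun k => (a k - a (k + 1)) / C)
    · intro k
      rw [le_div_iff₀ hCpos]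
      have := hdec k
      simp only [ha]
      nlinarith
    · simpa using hdiff.div_const C
  have hcompx := (Real.continuous_sqrt.tendsto' 0 0 Real.sqrt_zero).comp hsq
  have heq : (fun k => ‖gradient f (x k)‖)
      = (fun s => Real.sqrt s) ∘ (fun k => ‖gradient f (x k)‖ ^ 2) :=
    funext fun k => (Real.sqrt_sq (norm_nonneg _)).symm
  rw [heq]
  exact hcompx
end
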